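/- Let Ξ₁, …, Ξₘ be countably infinite ordered Ramsey structures with relational signatures, let k ≥ 1 and n ≥ 1, let a¹, …, aⁿ be elements of the product Ξ₁×⋯×Ξₘ, and let Fᵢ ⊆ Ξᵢ be finite subsets for 1 ≤ i ≤ m. Then there exist finite subsets Sᵢ ⊆ Ξᵢ such that for every coloring with k colors of the sequences of n elements of S₁×⋯×Sₘ whose type equals the type of (a¹, …, aⁿ), there exist subsets F′ᵢ ⊆ Sᵢ, each F′ᵢ inducing in Ξᵢ a substructure isomorphic to the substructure induced by Fᵢ, such that the coloring is constant on all sequences of n elements of F′₁×⋯×F′ₘ whose type equals the type of (a¹, …, aⁿ). -/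

import Mathlib

open FirstOrder FirstOrder.Language

namespace PaperDef

/-- The structure `M` is *ordered*: some binary relation symbol of the signature
denotes a linear order on the domain. -/
def Ordered (L : Language) (M : Type*) [L.Structure M] : Prop :=
  ∃ r : L.Relations 2, IsLinearOrder M (fun a b => Structure.RelMap r ![a, b])

/-- A class of structures is a *Ramsey class*. -/
def RamseyClass {L : Language} (K : Set (CategoryTheory.Bundled.{0} L.Structure)) : Prop :=
  ∀ k : ℕ, 1 ≤ k → ∀ H ∈ K, ∀ P ∈ K, ∃ S ∈ K,
    ∀ χ : {Q : L.Substructure S // Nonempty (P ≃[L] Q)} → Fin k,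
      ∃ e : H ↪[L] S,
        ∀ Q₁ Q₂ : {Q : L.Substructure S // Nonempty (P ≃[L] Q)},
          (Q₁.1 : Set S) ⊆ Set.range e → (Q₂.1 : Set S) ⊆ Set.range e → χ Q₁ = χ Q₂

/-- `M` is *finitely bounded*: membership of a finite(ly generated) structure in the age of `M`
is characterized by finitely many forbidden substructures. -/
def FinitelyBounded (L : Language) (M : Type) [L.Structure M] : Prop :=
  ∃ (k : ℕ) (F : Fin k → CategoryTheory.Bundled.{0} L.Structure),
    (∀ i, Structure.FG L (F i)) ∧
    ∀ A : CategoryTheory.Bundled.{0} L.Structure, Structure.FG L A →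
      (A ∈ L.age M ↔ ∀ i, ¬ Nonempty ((F i) ↪[L] A))

/-- The `L'`-structure on `M` is a *reduct* of the `L`-structure on `M`:
every relation of the former is first-order definable in the latter. -/
def IsReduct (L L' : Language) (M : Type*) [L.Structure M] [L'.Structure M] : Prop :=
  ∀ (n : ℕ) (r : L'.Relations n), ∃ φ : L.Formula (Fin n),
    ∀ x : Fin n → M, Structure.RelMap r x ↔ φ.Realize x

/-- Two `n`-tuples have the same (complete first-order) type. -/
def SameType (L : Language) (M : Type*) [L.Structure M] {n : ℕ} (a b : Fin n → M) : Prop :=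
  ∀ φ : L.Formula (Fin n), φ.Realize a ↔ φ.Realize b

/-- A function is *canonical*: it maps tuples of equal types to tuples of equal types. -/
def Canonical (L L' : Language) (X Ω : Type*) [L.Structure X] [L'.Structure Ω]
    (f : X → Ω) : Prop :=
  ∀ (n : ℕ) (a b : Fin n → X), SameType L X a b →
    SameType L' Ω (fun i => f (a i)) (fun i => f (b i))

/-- A function is *canonical on a set `F`*. -/
def CanonicalOn (L L' : Language) (X Ω : Type*) [L.Structure X] [L'.Structure Ω]
    (F : Set X) (f : X → Ω) : Prop :=
  ∀ (n : ℕ) (a b : Fin n → X), (∀ i, a i ∈ F) → (∀ i, b i ∈ F) → SameType L X a b →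
    SameType L' Ω (fun i => f (a i)) (fun i => f (b i))

/-- `M` is ω-categorical: every countable model of its complete theory is isomorphic to it. -/
def OmegaCategorical (L : Language) (M : Type) [L.Structure M] : Prop :=
  ∀ (N : Type) [L.Structure N], Countable N →
    (∀ φ : L.Sentence, φ ∈ L.completeTheory M → N ⊨ φ) → Nonempty (M ≃[L] N)

/-- Primitive positive formulas: built from atomic formulas using `∧` and `∃`. -/
inductive IsPrimitivePositive {L : Language} {α : Type*} :
    ∀ {n : ℕ}, L.BoundedFormula α n → Prop
  | atomic {n : ℕ} {φ : L.BoundedFormula α n} (h : φ.IsAtomic) : IsPrimitivePositive φ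
  | inf {n : ℕ} {φ ψ : L.BoundedFormula α n} :
      IsPrimitivePositive φ → IsPrimitivePositive ψ → IsPrimitivePositive (φ ⊓ ψ)
  | ex {n : ℕ} {φ : L.BoundedFormula α (n + 1)} :
      IsPrimitivePositive φ → IsPrimitivePositive φ.ex

/-- Existential formulas: existentially quantified quantifier-free formulas. -/
inductive IsExistential {L : Language} {α : Type*} :
    ∀ {n : ℕ}, L.BoundedFormula α n → Prop
  | of_isQF {n : ℕ} {φ : L.BoundedFormula α n} (h : φ.IsQF) : IsExistential φ
  | ex {n : ℕ} {φ : L.BoundedFormula α (n + 1)} : IsExistential φ → IsExistential φ.ex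

/-- Existential positive formulas: built from atomic formulas using `∧`, `∨` and `∃`. -/
inductive IsExistentialPositive {L : Language} {α : Type*} :
    ∀ {n : ℕ}, L.BoundedFormula α n → Prop
  | atomic {n : ℕ} {φ : L.BoundedFormula α n} (h : φ.IsAtomic) : IsExistentialPositive φ
  | inf {n : ℕ} {φ ψ : L.BoundedFormula α n} :
      IsExistentialPositive φ → IsExistentialPositive ψ → IsExistentialPositive (φ ⊓ ψ)
  | sup {n : ℕ} {φ ψ : L.BoundedFormula α n} :
      IsExistentialPositive φ → IsExistentialPositive ψ → IsExistentialPositive (φ ⊔ ψ)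
  | ex {n : ℕ} {φ : L.BoundedFormula α (n + 1)} :
      IsExistentialPositive φ → IsExistentialPositive φ.ex

/-- A `k`-ary operation *preserves* an `m`-ary relation. -/
def Preserves {D : Type*} {k m : ℕ} (f : (Fin k → D) → D) (R : (Fin m → D) → Prop) : Prop :=
  ∀ rows : Fin k → Fin m → D, (∀ j, R (rows j)) → R (fun i => f (fun j => rows j i))

/-- A unary operation *preserves* an `m`-ary relation. -/
def Preserves1 {D : Type*} {m : ℕ} (f : D → D) (R : (Fin m → D) → Prop) : Prop :=
  ∀ a : Fin m → D, R a → R (fun i => f (a i))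

/-- An endomorphism of the structure `M`. -/
def IsEndo (L : Language) (M : Type*) [L.Structure M] (f : M → M) : Prop :=
  ∀ (n : ℕ) (r : L.Relations n) (x : Fin n → M),
    Structure.RelMap r x → Structure.RelMap r (fun i => f (x i))

/-- A self-embedding of the structure `M`. -/
def IsSelfEmb (L : Language) (M : Type*) [L.Structure M] (f : M → M) : Prop :=
  Function.Injective f ∧ ∀ (n : ℕ) (r : L.Relations n) (x : Fin n → M),
    (Structure.RelMap r (fun i => f (x i)) ↔ Structure.RelMap r x)

/-- A polymorphism of the structure `M`. -/
def IsPoly (L : Language) (M : Type*) [L.Structure M] {k : ℕ} (f : (Fin k → M) → M) : Prop :=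
  ∀ (n : ℕ) (r : L.Relations n), Preserves f (fun x : Fin n → M => Structure.RelMap r x)

/-- The set of endomorphisms of `M`. -/
def EndSet (L : Language) (M : Type*) [L.Structure M] : Set (M → M) :=
  {f | IsEndo L M f}

/-- Two tuples lie in the same orbit of the automorphism group. -/
def SameOrbit (L : Language) (M : Type*) [L.Structure M] {n : ℕ} (a b : Fin n → M) : Prop :=
  ∃ α : M ≃[L] M, ∀ i, α (a i) = b i

/-- The subsets `s` and `t` induce isomorphic substructures. -/
def SetIso (L : Language) (X : Type*) [L.Structure X] (s t : Set X) : Prop :=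
  ∃ g : s ≃ t, ∀ (n : ℕ) (r : L.Relations n) (x : Fin n → s),
    (Structure.RelMap r (fun j => ((x j : X))) ↔ Structure.RelMap r (fun j => ((g (x j) : t) : X)))

/-- The `L[[Fin n]]`-structure on `M` obtained by naming the constants `c 0, …, c (n-1)`. -/
def withConstantsStruct (L : Language) {M : Type*} [L.Structure M] {n : ℕ} (c : Fin n → M) :
    (L[[Fin n]]).Structure M :=
  letI := constantsOn.structure c
  inferInstance

/-- Two sequences of `n` tuples from a product `Ξ₁ × ⋯ × Ξₘ` have the same type:
componentwise, the corresponding `n`-tuples have the same type. -/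
def SameSeqType {m : ℕ} (Ls : Fin m → Language) (Xs : Fin m → Type*)
    [∀ i, (Ls i).Structure (Xs i)] {n : ℕ} (a b : Fin n → ∀ i, Xs i) : Prop :=
  ∀ i, SameType (Ls i) (Xs i) (fun j => a j i) (fun j => b j i)

/-- A function defined on a product of structures is canonical. -/
def CanonicalProd {m : ℕ} (Ls : Fin m → Language) (Xs : Fin m → Type*)
    [∀ i, (Ls i).Structure (Xs i)] (L' : Language) (Ω : Type*) [L'.Structure Ω]
    (f : (∀ i, Xs i) → Ω) : Prop :=
  ∀ (n : ℕ) (a b : Fin n → ∀ i, Xs i), SameSeqType Ls Xs a b →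
    SameType L' Ω (fun j => f (a j)) (fun j => f (b j))

end PaperDef

namespace PaperDef

section OrderAux

lemma aux_le {α : Type*} [LinearOrder α] [Finite α] {f : α → α}
    (hf : ∀ x y, x ≤ y ↔ f x ≤ f y) : ∀ x, x ≤ f x := by
  classical
  letI := Fintype.ofFinite α
  by_contra h
  push_neg at h
  have hC : (Finset.univ.filter (fun x => f x < x)).Nonempty := by
    obtain ⟨x, hx⟩ := h
    exact ⟨x, by simp [hx]⟩
  obtain ⟨m, hm, hmin⟩ : ∃ m ∈ Finset.univ.filter (fun x => f x < x),
      ∀ x ∈ Finset.univ.filter (fun x => f x < x), ¬ x < m := by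
    obtain ⟨m, hm, hmin⟩ := Finset.exists_min_image _ id hC
    exact ⟨m, hm, fun x hx hlt => absurd (hmin x hx) (not_le.2 hlt)⟩
  simp only [Finset.mem_filter, Finset.mem_univ, true_and] at hm
  have hfm : f (f m) < f m := by
    rcases lt_iff_le_not_ge.1 hm with ⟨h1, h2⟩
    exact lt_iff_le_not_ge.2 ⟨(hf _ _).1 h1, fun hc => h2 ((hf _ _).2 hc)⟩
  exact hmin (f m) (by simp [hfm]) hm

lemma iff_mono_eq_id {α : Type*} [Finite α] {le : α → α → Prop} (h : IsLinearOrder α le)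
    {f : α → α} (hf : ∀ x y, le x y ↔ le (f x) (f y)) : ∀ x, f x = x := by
  classical
  letI : LinearOrder α :=
    { le := le
      le_refl := fun a => h.refl a
      le_trans := fun a b c => h.trans a b c
      le_antisymm := fun a b => h.antisymm a b
      le_total := fun a b => h.total a b
      toDecidableLE := Classical.decRel _ }
  have hinj : Function.Injective f := by
    intro x y hxy
    exact le_antisymm ((hf x y).2 (le_of_eq hxy)) ((hf y x).2 (le_of_eq hxy.symm))
  have hsurj : Function.Surjective f := Finite.surjective_of_injective hinj
  let E := Equiv.ofBijective f ⟨hinj, hsurj⟩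
  set g := E.symm with hg
  have hgf : ∀ x, g (f x) = x := fun x => E.symm_apply_apply x
  have hfg : ∀ x, f (g x) = x := fun x => E.apply_symm_apply x
  have hg' : ∀ x y, x ≤ y ↔ g x ≤ g y := by
    intro x y
    conv_lhs => rw [← hfg x, ← hfg y]
    exact (hf _ _).symm
  intro x
  have h1 : x ≤ f x := aux_le hf x
  have h2 : f x ≤ g (f x) := aux_le hg' (f x)
  rw [hgf] at h2
  exact le_antisymm h2 h1

lemma subtype_isLinearOrder {α : Type*} {le : α → α → Prop} (h : IsLinearOrder α le)
    (s : Set α) : IsLinearOrder s (fun x y => le x.1 y.1) :=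
  { refl := fun a => h.refl a.1
    trans := fun a b c => h.trans a.1 b.1 c.1
    antisymm := fun a b hab hba => Subtype.ext (h.antisymm a.1 b.1 hab hba)
    total := fun a b => h.total a.1 b.1 }

lemma tuple_eq_of_range {α : Type*} {le : α → α → Prop} (h : IsLinearOrder α le) {n : ℕ}
    {t b : Fin n → α} (hb : ∀ j, b j ∈ Set.range t)
    (hiff : ∀ j j', le (t j) (t j') ↔ le (b j) (b j')) : b = t := by
  classical
  have heq : ∀ j j', t j = t j' → b j = b j' := by
    intro j j' hjj
    refine h.antisymm _ _ ((hiff j j').1 ?_) ((hiff j' j).1 ?_)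
    · rw [hjj]; exact h.refl _
    · rw [hjj]; exact h.refl _
  haveI : Finite (Set.range t) := (Set.finite_range t).to_subtype
  set A := Set.range t
  have hlin := subtype_isLinearOrder h A
  let f : A → A := fun x => ⟨b (Classical.choose x.2), hb _⟩
  have hfspec : ∀ (x : A), t (Classical.choose x.2) = x.1 := fun x => Classical.choose_spec x.2
  have hf : ∀ x y : A, (fun u v : A => le u.1 v.1) x y ↔ (fun u v : A => le u.1 v.1) (f x) (f y) := by
    intro x y
    have h3 := hiff (Classical.choose x.2) (Classical.choose y.2)
    rw [hfspec x, hfspec y] at h3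
    exact h3
  have hid := iff_mono_eq_id hlin hf
  funext j
  have := hid ⟨t j, ⟨j, rfl⟩⟩
  have h2 : b (Classical.choose (⟨t j, ⟨j, rfl⟩⟩ : A).2) = t j := congrArg Subtype.val this
  rw [← h2]
  exact (heq _ _ (hfspec ⟨t j, ⟨j, rfl⟩⟩)).symm

end OrderAux

section ModelAux
variable {L : Language} {M : Type*} [L.Structure M]

/-- With no function symbols, any set is a substructure. -/
def mkSub (hrel : ∀ k : ℕ, IsEmpty (L.Functions k)) (s : Set M) : L.Substructure M :=
  ⟨s, fun {k} f => ((hrel k).elim f)⟩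

@[simp] lemma mem_mkSub {hrel : ∀ k : ℕ, IsEmpty (L.Functions k)} {s : Set M} {x : M} :
    x ∈ mkSub hrel s ↔ x ∈ s := Iff.rfl

@[simp] lemma coe_mkSub {hrel : ∀ k : ℕ, IsEmpty (L.Functions k)} {s : Set M} :
    ((mkSub hrel s : L.Substructure M) : Set M) = s := rfl

lemma fg_of_finite [Finite M] : Structure.FG L M := by
  refine Structure.fg_iff.2 ⟨Set.univ, Set.finite_univ, ?_⟩
  exact le_antisymm le_top (fun x _ => Substructure.subset_closure (Set.mem_univ x))

lemma finite_of_fg (hrel : ∀ k : ℕ, IsEmpty (L.Functions k)) (h : Structure.FG L M) :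
    Finite M := by
  obtain ⟨s, hs, hcl⟩ := Structure.fg_iff.1 h
  have h2 : Substructure.closure L s ≤ mkSub hrel s := Substructure.closure_le.2 (fun x hx => hx)
  rw [hcl] at h2
  have : (Set.univ : Set M) ⊆ s := fun x _ => h2 (Substructure.mem_top x)
  exact Set.finite_univ_iff.1 (hs.subset this)

lemma SameType.eq_iff {n : ℕ} {t u : Fin n → M} (h : SameType L M t u) (j j' : Fin n) :
    t j = t j' ↔ u j = u j' := by
  have := h ((Term.var j).equal (Term.var j'))
  simpa [Formula.realize_equal] using this

lemma SameType.rel_iff {n : ℕ} {t u : Fin n → M} (h : SameType L M t u) {q : ℕ}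
    (r : L.Relations q) (σ : Fin q → Fin n) :
    Structure.RelMap r (fun s => t (σ s)) ↔ Structure.RelMap r (fun s => u (σ s)) := by
  have := h (r.formula (fun s => Term.var (σ s)))
  simpa [Formula.realize_rel] using this

lemma matrix_comp {α β : Type*} (f : α → β) (x y : α) :
    (fun i => f (![x, y] i)) = ![f x, f y] := by
  funext i; fin_cases i <;> rfl

end ModelAux

section Rigidity

lemma iso_unique_apply {L : Language} {A B : Type*} [L.Structure A] [L.Structure B] [Finite A]
    (r0 : L.Relations 2)
    (hlin : IsLinearOrder A (fun a b => Structure.RelMap r0 ![a, b]))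
    (g g' : A ≃[L] B) : ∀ x, g x = g' x := by
  set f : A ≃[L] A := g'.symm.comp g with hfdef
  have hf : ∀ x y : A, Structure.RelMap r0 ![x, y] ↔ Structure.RelMap r0 ![f x, f y] := by
    intro x y
    have h1 := f.map_rel r0 ![x, y]
    rw [show (⇑f ∘ ![x, y]) = ![f x, f y] from matrix_comp f x y] at h1
    exact h1.symm
  have hid := iff_mono_eq_id hlin hf
  intro x
  have h2 := hid x
  have hx : g'.symm (g x) = x := h2
  have this := hx
  calc g x = g' (g'.symm (g x)) := (g'.apply_symm_apply _).symm
    _ = g' x := by rw [this]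

end Rigidity

section LemmaA

lemma lemmaA {L : Language} {X : Type} [L.Structure X]
    (hrel : ∀ k : ℕ, IsEmpty (L.Functions k)) (hord : Ordered L X)
    (hram : RamseyClass (L.age X)) {κ : Type} [Finite κ] [Nonempty κ]
    (F : Set X) (hF : F.Finite) {n : ℕ} (t : Fin n → X) :
    ∃ S : Set X, S.Finite ∧ ∀ χ : (Fin n → X) → κ,
      ∃ F' : Set X, F' ⊆ S ∧ SetIso L X F F' ∧
        ∀ u v : Fin n → X, (∀ j, u j ∈ F') → (∀ j, v j ∈ F') →
          SameType L X t u → SameType L X t v → χ u = χ v := by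
  classical
  obtain ⟨r0, hlin⟩ := hord
  obtain ⟨K, ⟨eκ⟩⟩ := Finite.exists_equiv_fin κ
  have hK : 1 ≤ K := Fin.pos (eκ (Classical.arbitrary κ))
  set G : Set X := F ∪ Set.range t with hGdef
  have hG : G.Finite := hF.union (Set.finite_range t)
  set HS : L.Substructure X := mkSub hrel G with hHSdef
  set PS : L.Substructure X := mkSub hrel (Set.range t) with hPSdef
  haveI hHfin : Finite HS := hG.to_subtype
  haveI hPfin : Finite PS := (Set.finite_range t).to_subtype
  set HB : CategoryTheory.Bundled.{0} L.Structure := ⟨HS, inferInstance⟩ with hHBdef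
  set PB : CategoryTheory.Bundled.{0} L.Structure := ⟨PS, inferInstance⟩ with hPBdef
  have hHage : HB ∈ L.age X := ⟨fg_of_finite, ⟨HS.subtype⟩⟩
  have hPage : PB ∈ L.age X := ⟨fg_of_finite, ⟨PS.subtype⟩⟩
  obtain ⟨S₀, hS₀age, hS₀ram⟩ := hram K hK HB hHage PB hPage
  obtain ⟨emb⟩ := hS₀age.2
  haveI hS₀fin : Finite S₀ := finite_of_fg hrel hS₀age.1
  -- the linear order on the subtype PS
  have hlinP : IsLinearOrder PS (fun a b => Structure.RelMap r0 ![a, b]) := by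
    have h1 := subtype_isLinearOrder hlin (PS : Set X)
    have h2 : (fun (a b : PS) => Structure.RelMap r0 ![a, b]) =
        (fun (a b : (PS : Set X)) => Structure.RelMap r0 ![a.1, b.1]) := by
      funext a b
      show Structure.RelMap r0 (fun i => ((![a, b] i : PS) : X)) = _
      rw [matrix_comp (fun (x : PS) => (x : X)) a b]
    rw [h2]
    exact h1
  refine ⟨Set.range emb, Set.finite_range emb, ?_⟩
  intro χ
  have tmem : ∀ j, t j ∈ PS := fun j => ⟨j, rfl⟩
  set tup : {Q : L.Substructure S₀ // Nonempty (PB ≃[L] Q)} → (Fin n → X) :=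
    fun Q j => emb (((Classical.choice Q.2) ⟨t j, tmem j⟩ : Q.1) : S₀) with htup
  set χ' : {Q : L.Substructure S₀ // Nonempty (PB ≃[L] Q)} → Fin K :=
    fun Q => eκ (χ (tup Q)) with hχ'
  obtain ⟨e, he⟩ := hS₀ram χ'
  set F' : Set X := (fun w : HS => emb (e w)) '' {w : HS | (w : X) ∈ F} with hF'def
  have hsub : F' ⊆ Set.range emb := by
    rintro _ ⟨w, _, rfl⟩
    exact ⟨e w, rfl⟩
  -- SetIso F F'
  have hiso : SetIso L X F F' := by
    set inc : F → HS := fun x => ⟨x.1, Or.inl x.2⟩ with hincdef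
    set ψ : F → F' := fun x => ⟨emb (e (inc x)), ⟨inc x, x.2, rfl⟩⟩ with hψdef
    have hbij : Function.Bijective ψ := by
      constructor
      · intro x y hxy
        have h1 : emb (e (inc x)) = emb (e (inc y)) := congrArg Subtype.val hxy
        have h2 : inc x = inc y := e.injective (emb.injective h1)
        have h2' : ((inc x : HS) : X) = ((inc y : HS) : X) := congrArg Subtype.val h2
        exact Subtype.ext h2'
      · rintro ⟨y, w, hwF, hwy⟩
        refine ⟨⟨w.1, hwF⟩, ?_⟩
        apply Subtype.ext
        show emb (e (inc ⟨w.1, hwF⟩)) = y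
        have h9 : inc ⟨w.1, hwF⟩ = w := Subtype.ext rfl
        rw [h9]
        exact hwy
    refine ⟨Equiv.ofBijective ψ hbij, ?_⟩
    intro q r x
    have h1 := emb.map_rel r (fun j => e (inc (x j)))
    have h2 := e.map_rel r (fun j => inc (x j))
    exact h2.symm.trans h1.symm
  -- key: every tuple of the right type with entries in F' comes from a colored copy
  have key : ∀ u : Fin n → X, (∀ j, u j ∈ F') → SameType L X t u →
      ∃ Q : {Q : L.Substructure S₀ // Nonempty (PB ≃[L] Q)},
        (Q.1 : Set S₀) ⊆ Set.range e ∧ tup Q = u := by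
    intro u hu hut
    have hex : ∀ j, ∃ w : HS, emb (e w) = u j := by
      intro j
      obtain ⟨w, _, hw2⟩ := hu j
      exact ⟨w, hw2⟩
    set w : Fin n → HS := fun j => (hex j).choose with hwdef
    have hw : ∀ j, emb (e (w j)) = u j := fun j => (hex j).choose_spec
    set φf : Fin n → (S₀ : Type) := fun j => e (w j) with hφdef
    have hφ : ∀ j, emb (φf j) = u j := hw
    set Qu : L.Substructure S₀ := mkSub hrel (Set.range φf) with hQudef
    have keyEq : ∀ j j', t j = t j' ↔ φf j = φf j' := by
      intro j j'
      rw [hut.eq_iff j j']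
      constructor
      · intro h
        exact emb.injective (by rw [hφ, hφ, h])
      · intro h
        rw [← hφ j, ← hφ j', h]
    have tmem' : ∀ (p : PS), ∃ j, t j = (p : X) := fun p => p.2
    set toF : PS → Qu := fun p => ⟨φf (tmem' p).choose, ⟨_, rfl⟩⟩ with htoFdef
    have htoF : ∀ p : PS, t ((tmem' p).choose) = (p : X) := fun p => (tmem' p).choose_spec
    have qmem : ∀ (q : Qu), ∃ j, φf j = (q : S₀) := fun q => q.2
    set invF : Qu → PS := fun q => ⟨t ((qmem q).choose), ⟨_, rfl⟩⟩ with hinvFdef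
    have hinvF : ∀ q, φf ((qmem q).choose) = (q : S₀) := fun q => (qmem q).choose_spec
    have left : ∀ p, invF (toF p) = p := by
      intro p
      apply Subtype.ext
      have hq : φf ((qmem (toF p)).choose) = φf ((tmem' p).choose) := hinvF (toF p)
      have h3 := (keyEq _ _).2 hq
      show t ((qmem (toF p)).choose) = (p : X)
      rw [h3, htoF p]
    have right : ∀ q, toF (invF q) = q := by
      intro q
      apply Subtype.ext
      have h4 : t ((tmem' (invF q)).choose) = t ((qmem q).choose) := htoF (invF q)
      have h5 := (keyEq _ _).1 h4
      show φf ((tmem' (invF q)).choose) = (q : S₀)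
      rw [h5, hinvF q]
    have maprel : ∀ (q : ℕ) (r : L.Relations q) (x : Fin q → PS),
        Structure.RelMap r (fun s => ((toF (x s) : Qu) : S₀)) ↔
          Structure.RelMap r (fun s => ((x s : PS) : X)) := by
      intro q r x
      have h2 := emb.map_rel r (fun s => φf ((tmem' (x s)).choose))
      have h3 : (⇑emb ∘ fun s => φf ((tmem' (x s)).choose)) =
          fun s => u ((tmem' (x s)).choose) := by
        funext s; exact hφ _
      rw [h3] at h2
      have h4 := hut.rel_iff r (fun s => (tmem' (x s)).choose)
      have h5 : (fun s => t ((tmem' (x s)).choose)) = fun s => ((x s : PS) : X) := by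
        funext s; exact htoF (x s)
      rw [h5] at h4
      exact h2.symm.trans h4.symm
    set iso : PB ≃[L] Qu :=
      ⟨⟨toF, invF, left, right⟩, fun {q} f0 x => ((hrel q).elim f0), maprel _⟩ with hisodef
    refine ⟨⟨Qu, ⟨iso⟩⟩, ?_, ?_⟩
    · rintro _ ⟨j, rfl⟩
      exact ⟨w j, rfl⟩
    · funext j
      have hrig := iso_unique_apply (A := PS) (B := Qu) r0 hlinP
        (Classical.choice (⟨iso⟩ : Nonempty (PB ≃[L] Qu))) iso ⟨t j, tmem j⟩
      show emb (((Classical.choice (⟨iso⟩ : Nonempty (PB ≃[L] Qu))) ⟨t j, tmem j⟩ : Qu) : S₀) = u j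
      rw [hrig]
      have h6 : (iso ⟨t j, tmem j⟩ : S₀) = φf ((tmem' ⟨t j, tmem j⟩).choose) := rfl
      have h7 : t ((tmem' ⟨t j, tmem j⟩).choose) = t j := htoF ⟨t j, tmem j⟩
      have h8 := (keyEq _ _).1 h7
      show emb ((iso ⟨t j, tmem j⟩ : Qu) : S₀) = u j
      rw [h6, h8, hφ]
  refine ⟨F', hsub, hiso, ?_⟩
  intro u v hu hv hut hvt
  obtain ⟨Qu, hQu1, hQu2⟩ := key u hu hut
  obtain ⟨Qv, hQv1, hQv2⟩ := key v hv hvt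
  have := he Qu Qv hQu1 hQv1
  rw [hχ'] at this
  simp only [hQu2, hQv2] at this
  exact eκ.injective this

end LemmaA


lemma SameType.le_iff {L : Language} {M : Type*} [L.Structure M] {n : ℕ} {t u : Fin n → M}
    (h : SameType L M t u) (r0 : L.Relations 2) (j j' : Fin n) :
    Structure.RelMap r0 ![t j, t j'] ↔ Structure.RelMap r0 ![u j, u j'] := by
  have h1 := h.rel_iff r0 ![j, j']
  rwa [show (fun s => t (![j, j'] s)) = ![t j, t j'] from matrix_comp t j j',
    show (fun s => u (![j, j'] s)) = ![u j, u j'] from matrix_comp u j j'] at h1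

/-- A tuple with the same type as `t`, all of whose entries are values of `t`, equals `t`. -/
lemma SameType.eq_of_range {L : Language} {M : Type*} [L.Structure M] (hord : Ordered L M)
    {n : ℕ} {t u : Fin n → M} (h : SameType L M t u) (hu : ∀ j, u j ∈ Set.range t) :
    u = t := by
  obtain ⟨r0, hlin⟩ := hord
  exact tuple_eq_of_range hlin hu (fun j j' => h.le_iff r0 j j')

lemma prodLemma (m : ℕ) (Ls : Fin m → Language) (Xs : Fin m → Type)
    [∀ i, (Ls i).Structure (Xs i)]
    (hrel : ∀ (i) (k : ℕ), IsEmpty ((Ls i).Functions k))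
    (hord : ∀ i, Ordered (Ls i) (Xs i))
    (hram : ∀ i, RamseyClass ((Ls i).age (Xs i)))
    (k : ℕ) (hk : 1 ≤ k) (n : ℕ)
    (a : Fin n → ∀ i, Xs i) (F : ∀ i, Set (Xs i)) (hF : ∀ i, (F i).Finite) :
    ∀ l : ℕ, l ≤ m → ∃ S : ∀ i, Set (Xs i), (∀ i, (S i).Finite) ∧
      ∀ χ : (Fin n → ∀ i, Xs i) → Fin k,
        ∃ F' : ∀ i, Set (Xs i), (∀ i, F' i ⊆ S i) ∧
          (∀ i : Fin m, (i : ℕ) < l → SetIso (Ls i) (Xs i) (F i) (F' i)) ∧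
          (∀ i : Fin m, l ≤ (i : ℕ) → F' i = Set.range (fun j => a j i)) ∧
          ∀ b c : Fin n → ∀ i, Xs i,
            (∀ j i, b j i ∈ F' i) → (∀ j i, c j i ∈ F' i) →
            SameSeqType Ls Xs a b → SameSeqType Ls Xs a c → χ b = χ c := by
  classical
  intro l
  induction l with
  | zero =>
    intro _
    refine ⟨fun i => Set.range (fun j => a j i), fun i => Set.finite_range _, ?_⟩
    intro χ
    refine ⟨fun i => Set.range (fun j => a j i), fun i => subset_rfl,
      fun i hi => absurd hi (Nat.not_lt_zero _), fun i _ => rfl, ?_⟩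
    intro b c hb hc hab hac
    have hba : b = a := by
      funext j
      funext i
      have := (hab i).eq_of_range (hord i) (fun j' => hb j' i)
      exact congrFun this j
    have hca : c = a := by
      funext j
      funext i
      have := (hac i).eq_of_range (hord i) (fun j' => hc j' i)
      exact congrFun this j
    rw [hba, hca]
  | succ l ih =>
    intro hl1
    obtain ⟨S1, hS1fin, hIH⟩ := ih (le_of_lt hl1)
    set i₀ : Fin m := ⟨l, hl1⟩ with hi₀def
    set Tset : ∀ i, Set (Xs i) := fun i => S1 i ∪ Set.range (fun j => a j i) with hTdef
    have hTfin : ∀ i, (Tset i).Finite := fun i => (hS1fin i).union (Set.finite_range _)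
    haveI : ∀ i, Finite (Tset i) := fun i => (hTfin i).to_subtype
    set κ : Type := (Fin n → ∀ i, Tset i) → Fin k with hκdef
    haveI : Finite κ := by
      haveI : Finite (Fin n → ∀ i, Tset i) := by infer_instance
      infer_instance
    haveI : Nonempty (Fin k) := ⟨⟨0, hk⟩⟩
    haveI : Nonempty κ := ⟨fun _ => ⟨0, hk⟩⟩
    obtain ⟨S₀, hS₀fin, hA⟩ := lemmaA (hrel i₀) (hord i₀) (hram i₀)
      (κ := κ) (F i₀) (hF i₀) (fun j => a j i₀)
    refine ⟨Function.update Tset i₀ S₀, ?_, ?_⟩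
    · intro i
      by_cases hi : i = i₀
      · subst hi; rw [Function.update_self]; exact hS₀fin
      · rw [Function.update_of_ne hi]; exact hTfin i
    intro χ
    set χ₀ : (Fin n → Xs i₀) → κ :=
      fun u v => χ (fun j => Function.update (fun i => (v j i : Xs i)) i₀ (u j)) with hχ₀def
    obtain ⟨F'₀, hF'₀sub, hF'₀iso, hF'₀const⟩ := hA χ₀
    by_cases hex : ∃ u : Fin n → Xs i₀, (∀ j, u j ∈ F'₀) ∧
        SameType (Ls i₀) (Xs i₀) (fun j => a j i₀) u
    case neg =>
      obtain ⟨F'', hsub'', hiso'', hfroz'', _⟩ := hIH χ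
      refine ⟨Function.update F'' i₀ F'₀, ?_, ?_, ?_, ?_⟩
      · intro i
        by_cases hi : i = i₀
        · subst hi; rw [Function.update_self, Function.update_self]; exact hF'₀sub
        · rw [Function.update_of_ne hi, Function.update_of_ne hi]
          exact (hsub'' i).trans Set.subset_union_left
      · intro i hi
        by_cases hieq : i = i₀
        · subst hieq; rw [Function.update_self]; exact hF'₀iso
        · have : (i : ℕ) < l := by
            rcases Nat.lt_succ_iff_lt_or_eq.1 hi with h | h
            · exact h
            · exact absurd (Fin.ext h) hieq
          rw [Function.update_of_ne hieq]
          exact hiso'' i this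
      · intro i hi
        have hieq : i ≠ i₀ := by
          intro hcon
          rw [hcon] at hi
          exact absurd hi (by simp [hi₀def])
        rw [Function.update_of_ne hieq]
        exact hfroz'' i (le_of_lt hi)
      · intro b c hb hc hab hac
        exfalso
        refine hex ⟨fun j => b j i₀, fun j => ?_, hab i₀⟩
        have := hb j i₀
        rwa [Function.update_self] at this
    case pos =>
      obtain ⟨u₀, hu₀mem, hu₀type⟩ := hex
      set g : κ := χ₀ u₀ with hgdef
      set χ₁ : (Fin n → ∀ i, Xs i) → Fin k :=
        fun b => if h : ∀ j i, b j i ∈ Tset i then g (fun j i => ⟨b j i, h j i⟩) else χ b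
        with hχ₁def
      obtain ⟨F'', hsub'', hiso'', hfroz'', hconst''⟩ := hIH χ₁
      refine ⟨Function.update F'' i₀ F'₀, ?_, ?_, ?_, ?_⟩
      · intro i
        by_cases hi : i = i₀
        · subst hi; rw [Function.update_self, Function.update_self]; exact hF'₀sub
        · rw [Function.update_of_ne hi, Function.update_of_ne hi]
          exact (hsub'' i).trans Set.subset_union_left
      · intro i hi
        by_cases hieq : i = i₀
        · subst hieq; rw [Function.update_self]; exact hF'₀iso
        · have : (i : ℕ) < l := by
            rcases Nat.lt_succ_iff_lt_or_eq.1 hi with h | h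
            · exact h
            · exact absurd (Fin.ext h) hieq
          rw [Function.update_of_ne hieq]
          exact hiso'' i this
      · intro i hi
        have hieq : i ≠ i₀ := by
          intro hcon
          rw [hcon] at hi
          exact absurd hi (by simp [hi₀def])
        rw [Function.update_of_ne hieq]
        exact hfroz'' i (le_of_lt hi)
      · intro b c hb hc hab hac
        -- replace coordinate i₀ by the values of `a`
        have froz0 : F'' i₀ = Set.range (fun j => a j i₀) := hfroz'' i₀ (le_refl _)
        have main : ∀ d : Fin n → ∀ i, Xs i, (∀ j i, d j i ∈ Function.update F'' i₀ F'₀ i) →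
            SameSeqType Ls Xs a d → χ d = χ₁ (fun j => Function.update (d j) i₀ (a j i₀)) := by
          intro d hd had
          set d' : Fin n → ∀ i, Xs i := fun j => Function.update (d j) i₀ (a j i₀) with hd'def
          have hd'mem : ∀ j i, d' j i ∈ Tset i := by
            intro j i
            by_cases hi : i = i₀
            · subst hi
              rw [hd'def]
              simp only [Function.update_self]
              exact Set.mem_union_right _ ⟨j, rfl⟩
            · rw [hd'def]
              simp only [Function.update_of_ne hi]
              have := hd j i
              rw [Function.update_of_ne hi] at this
              exact Set.mem_union_left _ (hsub'' i this)
          have hud : ∀ j, d j i₀ ∈ F'₀ := by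
            intro j
            have := hd j i₀
            rwa [Function.update_self] at this
          have hχ₀eq : χ₀ (fun j => d j i₀) = g := by
            rw [hgdef]
            exact hF'₀const _ _ hud hu₀mem (had i₀) hu₀type
          have hdite : χ₁ d' = g (fun j i => ⟨d' j i, hd'mem j i⟩) := by
            rw [hχ₁def]
            simp only [dif_pos (fun j i => hd'mem j i)]
          rw [hdite, ← hχ₀eq]
          rw [hχ₀def]
          congr 1
          funext j
          funext i
          by_cases hi : i = i₀
          · subst hi
            rw [Function.update_self]
          · rw [Function.update_of_ne hi]
            show d j i = Function.update (d j) i₀ (a j i₀) i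
            rw [Function.update_of_ne hi]
        have hb' : χ b = χ₁ (fun j => Function.update (b j) i₀ (a j i₀)) := main b hb hab
        have hc' : χ c = χ₁ (fun j => Function.update (c j) i₀ (a j i₀)) := main c hc hac
        rw [hb', hc']
        have hmemb : ∀ j i, Function.update (b j) i₀ (a j i₀) i ∈ F'' i := by
          intro j i
          by_cases hi : i = i₀
          · subst hi
            rw [Function.update_self, froz0]
            exact ⟨j, rfl⟩
          · rw [Function.update_of_ne hi]
            have := hb j i
            rwa [Function.update_of_ne hi] at this
        have hmemc : ∀ j i, Function.update (c j) i₀ (a j i₀) i ∈ F'' i := by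
          intro j i
          by_cases hi : i = i₀
          · subst hi
            rw [Function.update_self, froz0]
            exact ⟨j, rfl⟩
          · rw [Function.update_of_ne hi]
            have := hc j i
            rwa [Function.update_of_ne hi] at this
        have htypeb : SameSeqType Ls Xs a (fun j => Function.update (b j) i₀ (a j i₀)) := by
          intro i
          by_cases hi : i = i₀
          · subst hi
            have : (fun j => Function.update (b j) i₀ (a j i₀) i₀) = fun j => a j i₀ := by
              funext j; rw [Function.update_self]
            rw [this]
            exact fun φ => Iff.rfl
          · have : (fun j => Function.update (b j) i₀ (a j i₀) i) = fun j => b j i := by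
              funext j; rw [Function.update_of_ne hi]
            rw [this]
            exact hab i
        have htypec : SameSeqType Ls Xs a (fun j => Function.update (c j) i₀ (a j i₀)) := by
          intro i
          by_cases hi : i = i₀
          · subst hi
            have : (fun j => Function.update (c j) i₀ (a j i₀) i₀) = fun j => a j i₀ := by
              funext j; rw [Function.update_self]
            rw [this]
            exact fun φ => Iff.rfl
          · have : (fun j => Function.update (c j) i₀ (a j i₀) i) = fun j => c j i := by
              funext j; rw [Function.update_of_ne hi]
            rw [this]
            exact hac i
        exact hconst'' _ _ hmemb hmemc htypeb htypec

end PaperDef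

namespace PaperDef
/-- **Lemma 10 of the paper (the ordered Ramsey product lemma).** -/
theorem ordered_Ramsey_product_lemma
    (m : ℕ) (hm : 1 ≤ m) (Ls : Fin m → Language) (Xs : Fin m → Type)
    [∀ i, (Ls i).Structure (Xs i)]
    (hcnt : ∀ i, Countable (Xs i)) (hinf : ∀ i, Infinite (Xs i))
    (hrel : ∀ (i) (k : ℕ), IsEmpty ((Ls i).Functions k))
    (hord : ∀ i, Ordered (Ls i) (Xs i))
    (hram : ∀ i, RamseyClass ((Ls i).age (Xs i)))
    (k : ℕ) (hk : 1 ≤ k) (n : ℕ) (hn : 1 ≤ n)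
    (a : Fin n → ∀ i, Xs i) (F : ∀ i, Set (Xs i)) (hF : ∀ i, (F i).Finite) :
    ∃ S : ∀ i, Set (Xs i), (∀ i, (S i).Finite) ∧
      ∀ χ : (Fin n → ∀ i, Xs i) → Fin k,
        ∃ F' : ∀ i, Set (Xs i),
          (∀ i, F' i ⊆ S i) ∧ (∀ i, SetIso (Ls i) (Xs i) (F i) (F' i)) ∧
          ∀ b c : Fin n → ∀ i, Xs i,
            (∀ j i, b j i ∈ F' i) → (∀ j i, c j i ∈ F' i) →
            SameSeqType Ls Xs a b → SameSeqType Ls Xs a c → χ b = χ c := by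
  obtain ⟨S, hSfin, hS⟩ := prodLemma m Ls Xs hrel hord hram k hk n a F hF m le_rfl
  refine ⟨S, hSfin, ?_⟩
  intro χ
  obtain ⟨F', h1, h2, _, h4⟩ := hS χ
  exact ⟨F', h1, fun i => h2 i i.isLt, h4⟩

end PaperDef
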